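/- For every partition λ of 2n (with 2n boxes), the sum of contents of its Young diagram is at least -n^2 + 2n, i.e., p_1(λ) ≥ -n^2 + 2n, with the minimum attained at λ = [2^n]. -/

import Mathlib

/-- The sum of contents `j - i` (0-indexed) over the cells of the Young diagram whose
row lengths are given by the list `L`. -/
def contentSum (L : List ℕ) : ℤ :=
  ∑ i ∈ Finset.range L.length, ∑ j ∈ Finset.range (L.getD i 0), ((j : ℤ) - (i : ℤ))

lemma sum_eq_range_getD (L : List ℕ) : L.sum = ∑ i ∈ Finset.range L.length, L.getD i 0 := by
  induction L with
  | nil => simp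
  | cons a t ih => simp [Finset.sum_range_succ', ih, add_comm]

lemma gauss_int (k : ℕ) : (∑ i ∈ Finset.range k, (i : ℤ)) * 2 = k * (k - 1) := by
  induction k with
  | zero => simp
  | succ m ih => rw [Finset.sum_range_succ]; push_cast; push_cast at ih; nlinarith [ih]

lemma contentSum_lower (n : ℕ) (L : List ℕ) (h2 : ∀ a ∈ L, 2 ≤ a)
    (hsum : L.sum = 2 * n) (hsort : L.Pairwise (· ≥ ·)) :
    -(n : ℤ) ^ 2 + 2 * (n : ℤ) ≤ contentSum L := by
  set k := L.length with hk
  have hsum' : ∑ i ∈ Finset.range k, L.getD i 0 = 2 * n := by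
    rw [← sum_eq_range_getD L]; exact hsum
  have hmem : ∀ i, i < k → L.getD i 0 ∈ L := by
    intro i hi
    rw [List.getD_eq_getElem _ _ hi]
    exact List.getElem_mem hi
  -- key: i * L_i + 2 * (k - i) ≤ 2 * n
  have key : ∀ i, i < k → i * L.getD i 0 + 2 * (k - i) ≤ 2 * n := by
    intro i hi
    rw [← hsum', Finset.range_eq_Ico,
      ← Finset.sum_Ico_consecutive _ (Nat.zero_le i) (le_of_lt hi)]
    have hA : i * L.getD i 0 ≤ ∑ t ∈ Finset.Ico 0 i, L.getD t 0 := by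
      have : ∀ t ∈ Finset.Ico 0 i, L.getD i 0 ≤ L.getD t 0 := by
        intro t ht
        simp only [Finset.mem_Ico] at ht
        have hti : t < i := ht.2
        have htk : t < k := lt_trans hti hi
        rw [List.getD_eq_getElem _ _ hi, List.getD_eq_getElem _ _ htk]
        exact hsort.rel_get_of_lt (a := ⟨t, htk⟩) (b := ⟨i, hi⟩) hti
      calc i * L.getD i 0 = ∑ _t ∈ Finset.Ico 0 i, L.getD i 0 := by
            simp [mul_comm]
        _ ≤ _ := Finset.sum_le_sum this
    have hB : 2 * (k - i) ≤ ∑ t ∈ Finset.Ico i k, L.getD t 0 := by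
      calc 2 * (k - i) = ∑ _t ∈ Finset.Ico i k, 2 := by
            simp [Nat.card_Ico, mul_comm]
        _ ≤ _ := Finset.sum_le_sum fun t ht => h2 _ (hmem t (Finset.mem_Ico.mp ht).2)
    omega
  -- per-row bound (times 2)
  have row : ∀ i ∈ Finset.range k,
      ((L.getD i 0 : ℤ) - 2 * (2 * n - 2 * ((k : ℤ) - i)))
        ≤ (∑ j ∈ Finset.range (L.getD i 0), ((j : ℤ) - (i : ℤ))) * 2 := by
    intro i hi
    rw [Finset.mem_range] at hi
    set m := L.getD i 0 with hm
    have hm2 : 2 ≤ m := h2 _ (hmem i hi)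
    have hrow : (∑ j ∈ Finset.range m, ((j : ℤ) - (i : ℤ))) * 2
        = (m : ℤ) * ((m : ℤ) - 1) - 2 * i * m := by
      rw [Finset.sum_sub_distrib, sub_mul, gauss_int]
      simp [mul_comm, mul_assoc, mul_left_comm]
    rw [hrow]
    have hkey : (i : ℤ) * m + 2 * ((k : ℤ) - i) ≤ 2 * n := by
      have := key i hi
      have hik : (((k - i : ℕ)) : ℤ) = (k : ℤ) - i := by
        have : i ≤ k := le_of_lt hi
        push_cast [Nat.cast_sub this]; ring
      have hcast : (i : ℤ) * m + 2 * (((k - i : ℕ)) : ℤ) ≤ 2 * n := by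
        exact_mod_cast key i hi
      rw [hik] at hcast; exact hcast
    have hmm : (m : ℤ) * ((m : ℤ) - 1) ≥ (m : ℤ) := by nlinarith [show (2:ℤ) ≤ m from by exact_mod_cast hm2]
    linarith
  -- sum up
  have hsumZ : ∑ i ∈ Finset.range k, (L.getD i 0 : ℤ) = 2 * n := by exact_mod_cast hsum'
  have total : (∑ i ∈ Finset.range k, ((L.getD i 0 : ℤ) - 2 * (2 * n - 2 * ((k : ℤ) - i))))
      ≤ contentSum L * 2 := by
    rw [contentSum, Finset.sum_mul]
    exact Finset.sum_le_sum row
  have lhs_eval : (∑ i ∈ Finset.range k, ((L.getD i 0 : ℤ) - 2 * (2 * n - 2 * ((k : ℤ) - i))))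
      = 2 * n - 4 * n * k + 2 * (k : ℤ) ^ 2 + 2 * k := by
    have step : ∀ i ∈ Finset.range k, ((L.getD i 0 : ℤ) - 2 * (2 * n - 2 * ((k : ℤ) - i)))
        = (L.getD i 0 : ℤ) - (4 * (n : ℤ) - 4 * k) - 4 * i := fun i _ => by ring
    rw [Finset.sum_congr rfl step, Finset.sum_sub_distrib, Finset.sum_sub_distrib, hsumZ,
      Finset.sum_const, ← Finset.mul_sum]
    have := gauss_int k
    simp only [Finset.card_range, nsmul_eq_mul]
    nlinarith [this]
  have hfin : ((n : ℤ) - k) * (((n : ℤ) - k) - 1) ≥ 0 := by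
    rcases le_or_gt ((n : ℤ) - k) 0 with h | h
    · nlinarith
    · exact mul_nonneg (by linarith) (by omega)
  nlinarith [total, lhs_eval, hfin]

theorem contentSum_ge (n : ℕ) (μ : Nat.Partition n) :
    -(n : ℤ) ^ 2 + 2 * n
        ≤ contentSum (((μ.parts.map (fun a => 2 * a)).sort (· ≤ ·)).reverse) ∧
    contentSum (List.replicate n 2) = -(n : ℤ) ^ 2 + 2 * n := by
  constructor
  · apply contentSum_lower n
    · intro a ha
      simp only [List.mem_reverse, Multiset.mem_sort, Multiset.mem_map] at ha
      obtain ⟨b, hb, rfl⟩ := ha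
      have := μ.parts_pos hb
      omega
    · rw [List.sum_reverse, ← Multiset.sum_coe, Multiset.sort_eq, Multiset.sum_map_mul_left]
      simp [μ.parts_sum]
    · rw [List.pairwise_reverse]
      exact (Multiset.pairwise_sort ..).imp fun h => h
  · rw [contentSum]
    have hget : ∀ i ∈ Finset.range n, ∑ j ∈ Finset.range ((List.replicate n 2).getD i 0),
        ((j : ℤ) - (i : ℤ)) = 1 - 2 * i := by
      intro i hi
      rw [Finset.mem_range] at hi
      rw [List.getD_eq_getElem _ _ (by simpa using hi)]
      simp [Finset.sum_range_succ]
    rw [List.length_replicate, Finset.sum_congr rfl hget, Finset.sum_sub_distrib,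
      Finset.sum_const, ← Finset.mul_sum]
    have := gauss_int n
    simp only [Finset.card_range, nsmul_eq_mul, mul_one]
    nlinarith [this]
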